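/- There exist four closed line segments in ℝ³ such that the set of lines meeting all four segments has exactly four elements. -/

import Mathlib

open Set

noncomputable section

/-- The line in ℝ³ through `a` with direction `v`. -/
def lineThrough (a v : ℝ × ℝ × ℝ) : Set (ℝ × ℝ × ℝ) :=
  {p | ∃ r : ℝ, p = a + r • v}

/-- `L` is a line in ℝ³. -/
def IsLine (L : Set (ℝ × ℝ × ℝ)) : Prop :=
  ∃ a v : ℝ × ℝ × ℝ, v ≠ 0 ∧ L = lineThrough a v

/-- `L` is a transversal to the family of sets `s`: it is a line meeting every `s i`. -/
def IsTransversal {n : ℕ} (s : Fin n → Set (ℝ × ℝ × ℝ)) (L : Set (ℝ × ℝ × ℝ)) : Prop :=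
  IsLine L ∧ ∀ i, (L ∩ s i).Nonempty

/-- Two transversals `L₀`, `L₁` to the family `s` lie in the same connected component of
transversals: one can be moved continuously to the other while remaining a transversal. -/
def SameComp {n : ℕ} (s : Fin n → Set (ℝ × ℝ × ℝ)) (L₀ L₁ : Set (ℝ × ℝ × ℝ)) : Prop :=
  ∃ a v : ℝ → ℝ × ℝ × ℝ,
    ContinuousOn a (Icc 0 1) ∧ ContinuousOn v (Icc 0 1) ∧
    (∀ t ∈ Icc (0:ℝ) 1, v t ≠ 0) ∧
    (∀ t ∈ Icc (0:ℝ) 1, ∀ i, (lineThrough (a t) (v t) ∩ s i).Nonempty) ∧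
    lineThrough (a 0) (v 0) = L₀ ∧ lineThrough (a 1) (v 1) = L₁

namespace Stmt3Aux

def q : ℝ := Real.sqrt 2

lemma hq : q ^ 2 = 2 := Real.sq_sqrt (by norm_num)
lemma hq0 : 0 < q := Real.sqrt_pos.mpr (by norm_num)
lemma hq1 : 1 < q := by nlinarith [hq, hq0]
lemma hq2 : q < 2 := by nlinarith [hq, hq0]

def T : ℝ := 1 + q

lemma hT0 : 0 < T := by have := hq0; unfold T; linarith

lemma habs_1mq : |1 - q| ≤ T := by
  have h1 := hq1; have h2 := hq2
  rw [abs_le]; constructor <;> (unfold T; linarith)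

lemma habs_qm1 : |q - 1| ≤ T := by
  have h1 := hq1; have h2 := hq2
  rw [abs_le]; constructor <;> (unfold T; linarith)

lemma habs_1pq : |1 + q| ≤ T := by
  have h1 := hq1; have h2 := hq2
  rw [abs_le]; constructor <;> (unfold T; linarith)

lemma habs_neg : |-(1 + q)| ≤ T := by
  have h1 := hq1; have h2 := hq2
  rw [abs_le]; constructor <;> (unfold T; linarith)

/-- point at parameter `t` on the ruling line with angle `w = (wx,wy)`. -/
def ptA (wx wy t : ℝ) : ℝ × ℝ × ℝ := (wx - t * wy, wy + t * wx, t)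

def X (wx wy : ℝ) : ℝ × ℝ × ℝ := ptA wx wy (-T)
def Y (wx wy : ℝ) : ℝ × ℝ × ℝ := ptA wx wy T

/-- the candidate transversal line with "angle" `(c,s)`. -/
def Lu (c s : ℝ) : Set (ℝ × ℝ × ℝ) := lineThrough (c, s, 0) (s, -c, 1)

lemma Lu_isLine (c s : ℝ) : IsLine (Lu c s) :=
  ⟨(c, s, 0), (s, -c, 1), by simp [Prod.ext_iff], rfl⟩

lemma Lu_inj {c s c' s' : ℝ} (h : Lu c s = Lu c' s') : c = c' ∧ s = s' := by
  have hm : ((c, s, 0) : ℝ × ℝ × ℝ) ∈ Lu c' s' := by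
    rw [← h]; exact ⟨0, by simp⟩
  obtain ⟨r, hr⟩ := hm
  simp only [Prod.mk_add_mk, Prod.smul_mk, smul_eq_mul, Prod.mk.injEq] at hr
  obtain ⟨h1, h2, h3⟩ := hr
  have hr0 : r = 0 := by linarith
  subst hr0
  constructor <;> linarith

lemma mem_seg {wx wy t : ℝ} (ht : |t| ≤ T) :
    ptA wx wy t ∈ segment ℝ (X wx wy) (Y wx wy) := by
  obtain ⟨h1, h2⟩ := abs_le.mp ht
  have hT := hT0
  refine ⟨(T - t) / (2 * T), (T + t) / (2 * T),
    div_nonneg (by linarith) (by linarith),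
    div_nonneg (by linarith) (by linarith), by field_simp; ring, ?_⟩
  simp only [X, Y, ptA, Prod.smul_mk, smul_eq_mul, Prod.mk_add_mk, Prod.mk.injEq]
  refine ⟨by field_simp; ring, by field_simp; ring, by field_simp; ring⟩

lemma seg_sub {wx wy : ℝ} {p : ℝ × ℝ × ℝ} (hp : p ∈ segment ℝ (X wx wy) (Y wx wy)) :
    ∃ t : ℝ, |t| ≤ T ∧ p = ptA wx wy t := by
  obtain ⟨α, β, hα, hβ, hαβ, rfl⟩ := hp
  refine ⟨(β - α) * T, ?_, ?_⟩
  · have h1 : |β - α| ≤ 1 := abs_le.mpr ⟨by linarith, by linarith⟩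
    calc |(β - α) * T| = |β - α| * T := by rw [abs_mul, abs_of_pos hT0]
    _ ≤ 1 * T := by have := hT0; nlinarith
    _ = T := one_mul T
  · simp only [X, Y, ptA, Prod.smul_mk, smul_eq_mul, Prod.mk_add_mk, Prod.mk.injEq]
    refine ⟨by linear_combination wx * hαβ, by linear_combination wy * hαβ, by ring⟩

lemma line_meets {c s wx wy t : ℝ} (ht : |t| ≤ T)
    (h1 : wx - t * wy = c + t * s) (h2 : wy + t * wx = s - t * c) :
    (Lu c s ∩ segment ℝ (X wx wy) (Y wx wy)).Nonempty := by
  refine ⟨ptA wx wy t, ⟨t, ?_⟩, mem_seg ht⟩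
  simp only [ptA, Prod.smul_mk, smul_eq_mul, Prod.mk_add_mk, Prod.mk.injEq]
  refine ⟨by linarith, by linarith, by ring⟩

def W1 : Fin 4 → ℝ := ![q / 2, -(q / 2), -(q / 2), q / 2]
def W2 : Fin 4 → ℝ := ![q / 2, q / 2, -(q / 2), -(q / 2)]

lemma W1_0 : W1 0 = q / 2 := rfl
lemma W1_1 : W1 1 = -(q / 2) := rfl
lemma W1_2 : W1 2 = -(q / 2) := rfl
lemma W1_3 : W1 3 = q / 2 := rfl
lemma W2_0 : W2 0 = q / 2 := rfl
lemma W2_1 : W2 1 = q / 2 := rfl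
lemma W2_2 : W2 2 = -(q / 2) := rfl
lemma W2_3 : W2 3 = -(q / 2) := rfl

lemma hw : ∀ i : Fin 4, (W1 i) ^ 2 + (W2 i) ^ 2 = 1 := by
  intro i
  fin_cases i
  · show (q / 2) ^ 2 + (q / 2) ^ 2 = 1
    linear_combination (1 / 2) * hq
  · show (-(q / 2)) ^ 2 + (q / 2) ^ 2 = 1
    linear_combination (1 / 2) * hq
  · show (-(q / 2)) ^ 2 + (-(q / 2)) ^ 2 = 1
    linear_combination (1 / 2) * hq
  · show (q / 2) ^ 2 + (-(q / 2)) ^ 2 = 1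
    linear_combination (1 / 2) * hq


lemma half_le {x : ℝ} (h : q / 2 * x ≤ q / 2) : x ≤ 1 := by
  have h0 := hq0
  have h' : q / 2 * x ≤ q / 2 * 1 := by linarith
  exact le_of_mul_le_mul_left h' (by linarith)

lemma rulingA_false (V1 V2 t0 t1 : ℝ)
    (eA0 : (W1 0 * V1 + W2 0 * V2) + t0 * (W1 0 * V2 - W2 0 * V1) = t0)
    (eB0 : (W1 0 * V2 - W2 0 * V1) - t0 * (W1 0 * V1 + W2 0 * V2) = 1)
    (eA1 : (W1 1 * V1 + W2 1 * V2) + t1 * (W1 1 * V2 - W2 1 * V1) = t1)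
    (eB1 : (W1 1 * V2 - W2 1 * V1) - t1 * (W1 1 * V1 + W2 1 * V2) = 1) : False := by
  have hP0 : (W1 0 * V1 + W2 0 * V2) * (1 + t0 ^ 2) = 0 := by
    linear_combination eA0 - t0 * eB0
  have hP0' : W1 0 * V1 + W2 0 * V2 = 0 :=
    (mul_eq_zero.mp hP0).resolve_right (by positivity)
  have hP1 : (W1 1 * V1 + W2 1 * V2) * (1 + t1 ^ 2) = 0 := by
    linear_combination eA1 - t1 * eB1
  have hP1' : W1 1 * V1 + W2 1 * V2 = 0 :=
    (mul_eq_zero.mp hP1).resolve_right (by positivity)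
  have hQ1 : W1 1 * V2 - W2 1 * V1 = 1 := by
    linear_combination eB1 + t1 * hP1'
  rw [W1_0, W2_0] at hP0'
  rw [W1_1, W2_1] at hQ1
  linarith [hP0', hQ1]

lemma rulingB_classify (V1 V2 : ℝ) (t : Fin 4 → ℝ) (hbd : ∀ i, |t i| ≤ T)
    (hVn : V1 ^ 2 + V2 ^ 2 = 1)
    (eqA : ∀ i : Fin 4, (W1 i * V1 + W2 i * V2) + t i * (W1 i * V2 - W2 i * V1) = t i)
    (eqB : ∀ i : Fin 4, (W1 i * V2 - W2 i * V1) - t i * (W1 i * V1 + W2 i * V2) = -1) :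
    (V1 = 0 ∧ (V2 = 1 ∨ V2 = -1)) ∨ (V2 = 0 ∧ (V1 = 1 ∨ V1 = -1)) := by
  have hQle : ∀ i : Fin 4, W1 i * V2 - W2 i * V1 ≤ q / 2 := by
    intro i
    have hcomb : (W1 i * V2 - W2 i * V1) * (1 + t i ^ 2) = t i ^ 2 - 1 := by
      linear_combination eqB i + t i * eqA i
    have hb := abs_le.mp (hbd i)
    have hT' : T = 1 + q := rfl
    have ht2 : t i ^ 2 ≤ (1 + q) ^ 2 := by
      rw [hT'] at hb; nlinarith [hb.1, hb.2, hq0]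
    have hstep : 0 ≤ (q / 2 - (W1 i * V2 - W2 i * V1)) * (1 + t i ^ 2) := by
      have expand : (q / 2 - (W1 i * V2 - W2 i * V1)) * (1 + t i ^ 2)
          = q / 2 * (1 + t i ^ 2) - (t i ^ 2 - 1) := by
        linear_combination (-1) * hcomb
      rw [expand]
      nlinarith [hq, mul_nonneg (by linarith [hq2] : (0:ℝ) ≤ 1 - q / 2)
        (by linarith [ht2] : (0:ℝ) ≤ (1 + q) ^ 2 - t i ^ 2)]
    nlinarith [hstep, sq_nonneg (t i)]
  have g0 := hQle 0
  have g1 := hQle 1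
  have g2 := hQle 2
  have g3 := hQle 3
  rw [W1_0, W2_0] at g0
  rw [W1_1, W2_1] at g1
  rw [W1_2, W2_2] at g2
  rw [W1_3, W2_3] at g3
  have d0 : V2 - V1 ≤ 1 := half_le (by linarith [g0])
  have d1 : -V1 - V2 ≤ 1 := half_le (by linarith [g1])
  have d2 : V1 - V2 ≤ 1 := half_le (by linarith [g2])
  have d3 : V1 + V2 ≤ 1 := half_le (by linarith [g3])
  have hs2 : (V1 + V2) ^ 2 = 1 := by
    nlinarith [mul_nonneg (by linarith : (0:ℝ) ≤ 1 - (V1 + V2))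
        (by linarith : (0:ℝ) ≤ 1 + (V1 + V2)),
      mul_nonneg (by linarith : (0:ℝ) ≤ 1 - (V1 - V2))
        (by linarith : (0:ℝ) ≤ 1 + (V1 - V2)), hVn]
  have hd2 : (V1 - V2) ^ 2 = 1 := by
    nlinarith [mul_nonneg (by linarith : (0:ℝ) ≤ 1 - (V1 + V2))
        (by linarith : (0:ℝ) ≤ 1 + (V1 + V2)),
      mul_nonneg (by linarith : (0:ℝ) ≤ 1 - (V1 - V2))
        (by linarith : (0:ℝ) ≤ 1 + (V1 - V2)), hVn]
  have hprod : V1 * V2 = 0 := by linear_combination (1/4) * hs2 - (1/4) * hd2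
  rcases mul_eq_zero.mp hprod with h | h
  · left
    refine ⟨h, mul_self_eq_one_iff.mp ?_⟩
    linear_combination hVn - V1 * h
  · right
    refine ⟨h, mul_self_eq_one_iff.mp ?_⟩
    linear_combination hVn - V2 * h

end Stmt3Aux

set_option maxHeartbeats 2000000 in
open Stmt3Aux in
/-- there exist four segments in ℝ³ whose set of common transversal lines
has exactly four elements. -/
theorem stmt_3 :
    ∃ x y : Fin 4 → ℝ × ℝ × ℝ,
      {L : Set (ℝ × ℝ × ℝ) |
        IsLine L ∧ ∀ i, (L ∩ segment ℝ (x i) (y i)).Nonempty}.Finite ∧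
      {L : Set (ℝ × ℝ × ℝ) |
        IsLine L ∧ ∀ i, (L ∩ segment ℝ (x i) (y i)).Nonempty}.ncard = 4 := by
  refine ⟨fun i => X (W1 i) (W2 i), fun i => Y (W1 i) (W2 i), ?_⟩
  have hset : {L : Set (ℝ × ℝ × ℝ) |
      IsLine L ∧ ∀ i, (L ∩ segment ℝ (X (W1 i) (W2 i)) (Y (W1 i) (W2 i))).Nonempty}
      = {Lu 1 0, Lu 0 1, Lu (-1) 0, Lu 0 (-1)} := by
    apply Subset.antisymm
    · -- forward: any transversal is one of the four lines
      rintro L ⟨⟨a, v, hv, rfl⟩, hits⟩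
      obtain ⟨a1, a2, a3⟩ := a
      obtain ⟨v1, v2, v3⟩ := v
      have H : ∀ i : Fin 4, ∃ r t : ℝ, |t| ≤ T ∧
          ((a1, a2, a3) : ℝ × ℝ × ℝ) + r • ((v1, v2, v3) : ℝ × ℝ × ℝ)
            = ptA (W1 i) (W2 i) t := by
        intro i
        obtain ⟨p, ⟨r, hp⟩, hpseg⟩ := hits i
        obtain ⟨t, ht, hpt⟩ := seg_sub hpseg
        exact ⟨r, t, ht, by rw [← hp, hpt]⟩
      choose r t hbd hpt using H
      have e : ∀ i : Fin 4, (a1 + r i * v1 = W1 i - t i * W2 i) ∧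
          (a2 + r i * v2 = W2 i + t i * W1 i) ∧ (a3 + r i * v3 = t i) := by
        intro i
        have h := hpt i
        simpa only [ptA, Prod.mk_add_mk, Prod.smul_mk, smul_eq_mul, Prod.mk.injEq] using h
      -- all four points lie on the hyperboloid
      have hQ : ∀ i : Fin 4,
          (a1 + r i * v1) ^ 2 + (a2 + r i * v2) ^ 2 - (a3 + r i * v3) ^ 2 - 1 = 0 := by
        intro i
        obtain ⟨f1, f2, f3⟩ := e i
        rw [f1, f2, f3]
        linear_combination (1 + t i ^ 2) * hw i
      -- the parameters r i are pairwise distinct for segments with different angles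
      have hdiff : ∀ i j : Fin 4, (W1 i ≠ W1 j ∨ W2 i ≠ W2 j) → r i ≠ r j := by
        intro i j hne heq
        obtain ⟨f1i, f2i, f3i⟩ := e i
        obtain ⟨f1j, f2j, f3j⟩ := e j
        have htt : t i = t j := by rw [← f3i, ← f3j, heq]
        have g1 : W1 i - t i * W2 i = W1 j - t i * W2 j := by
          rw [← f1i, heq, f1j, htt]
        have g2 : W2 i + t i * W1 i = W2 j + t i * W1 j := by
          rw [← f2i, heq, f2j, htt]
        have k1 : (W1 i - W1 j) * (1 + t i ^ 2) = 0 := by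
          linear_combination g1 + t i * g2
        have k2 : (W2 i - W2 j) * (1 + t i ^ 2) = 0 := by
          linear_combination g2 - t i * g1
        have hpos : (0:ℝ) < 1 + t i ^ 2 := by positivity
        have w1eq : W1 i = W1 j := by
          have := (mul_eq_zero.mp k1).resolve_right (by positivity)
          linarith
        have w2eq : W2 i = W2 j := by
          have := (mul_eq_zero.mp k2).resolve_right (by positivity)
          linarith
        rcases hne with h | h
        · exact h w1eq
        · exact h w2eq
      have hne01 : W1 0 ≠ W1 1 := by
        rw [W1_0, W1_1]; have := hq0; intro h; linarith
      have hne02 : W1 0 ≠ W1 2 := by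
        rw [W1_0, W1_2]; have := hq0; intro h; linarith
      have hne12 : W2 1 ≠ W2 2 := by
        rw [W2_1, W2_2]; have := hq0; intro h; linarith
      have hr01 : r 0 ≠ r 1 := hdiff 0 1 (Or.inl hne01)
      have hr02 : r 0 ≠ r 2 := hdiff 0 2 (Or.inl hne02)
      have hr12 : r 1 ≠ r 2 := hdiff 1 2 (Or.inr hne12)
      -- kill the quadratic: the line lies on the hyperboloid
      have p01 : (r 0 - r 1) * ((v1 ^ 2 + v2 ^ 2 - v3 ^ 2) * (r 0 + r 1)
          + 2 * (a1 * v1 + a2 * v2 - a3 * v3)) = 0 := by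
        linear_combination hQ 0 - hQ 1
      have p02 : (r 0 - r 2) * ((v1 ^ 2 + v2 ^ 2 - v3 ^ 2) * (r 0 + r 2)
          + 2 * (a1 * v1 + a2 * v2 - a3 * v3)) = 0 := by
        linear_combination hQ 0 - hQ 2
      have f01 := (mul_eq_zero.mp p01).resolve_left (sub_ne_zero.mpr hr01)
      have f02 := (mul_eq_zero.mp p02).resolve_left (sub_ne_zero.mpr hr02)
      have p12 : (r 1 - r 2) * (v1 ^ 2 + v2 ^ 2 - v3 ^ 2) = 0 := by
        linear_combination f01 - f02
      have hA : v1 ^ 2 + v2 ^ 2 - v3 ^ 2 = 0 :=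
        (mul_eq_zero.mp p12).resolve_left (sub_ne_zero.mpr hr12)
      have hB : a1 * v1 + a2 * v2 - a3 * v3 = 0 := by
        linear_combination f01 / 2 - ((r 0 + r 1) / 2) * hA
      have hC : a1 ^ 2 + a2 ^ 2 - a3 ^ 2 = 1 := by
        linear_combination hQ 0 - (r 0 ^ 2) * hA - (2 * r 0) * hB
      have hv3 : v3 ≠ 0 := by
        intro h
        apply hv
        rw [h] at hA
        have h1sq : v1 ^ 2 = 0 := by nlinarith [sq_nonneg v1, sq_nonneg v2]
        have h2sq : v2 ^ 2 = 0 := by nlinarith [sq_nonneg v1, sq_nonneg v2]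
        have h1 : v1 = 0 := by
          have := sq_eq_zero_iff.mp h1sq; exact this
        have h2 : v2 = 0 := by
          have := sq_eq_zero_iff.mp h2sq; exact this
        simp [Prod.ext_iff, h, h1, h2]
      obtain ⟨V1, hV1def⟩ : ∃ V1 : ℝ, V1 = v1 / v3 := ⟨_, rfl⟩
      obtain ⟨V2, hV2def⟩ : ∃ V2 : ℝ, V2 = v2 / v3 := ⟨_, rfl⟩
      have hV1 : V1 * v3 = v1 := by rw [hV1def]; field_simp
      have hV2 : V2 * v3 = v2 := by rw [hV2def]; field_simp
      have hVn : V1 ^ 2 + V2 ^ 2 = 1 := by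
        rw [hV1def, hV2def]; field_simp; linear_combination hA
      have hVa : a1 * V1 + a2 * V2 = a3 := by
        rw [hV1def, hV2def]; field_simp; linear_combination hB
      obtain ⟨σ, hσdef⟩ : ∃ σ : ℝ, σ = a1 * V2 - a2 * V1 := ⟨_, rfl⟩
      have hσ2 : σ ^ 2 = 1 := by
        have h2 : (a1 * V1 + a2 * V2) ^ 2 = a3 ^ 2 := by rw [hVa]
        rw [hσdef]
        linear_combination (a1 ^ 2 + a2 ^ 2) * hVn - h2 + hC
      obtain ⟨C, hCdef⟩ : ∃ C : ℝ, C = a1 - a3 * V1 := ⟨_, rfl⟩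
      obtain ⟨S, hSdef⟩ : ∃ S : ℝ, S = a2 - a3 * V2 := ⟨_, rfl⟩
      have hCV : C * V1 + S * V2 = 0 := by
        rw [hCdef, hSdef]; linear_combination hVa - a3 * hVn
      have hCS : C * V2 - S * V1 = σ := by
        rw [hCdef, hSdef, hσdef]; ring
      -- rewrite the line in normalized form
      have hLset : lineThrough (a1, a2, a3) (v1, v2, v3) = lineThrough (C, S, 0) (V1, V2, 1) := by
        ext ⟨p1, p2, p3⟩
        simp only [lineThrough, mem_setOf_eq, Prod.mk_add_mk, Prod.smul_mk, smul_eq_mul,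
          Prod.mk.injEq]
        constructor
        · rintro ⟨u, h1, h2, h3⟩
          refine ⟨a3 + u * v3, ?_, ?_, by linarith⟩
          · rw [h1, hCdef]; linear_combination (-u) * hV1
          · rw [h2, hSdef]; linear_combination (-u) * hV2
        · rintro ⟨u, h1, h2, h3⟩
          refine ⟨(u - a3) / v3, ?_, ?_, by rw [h3]; field_simp; ring⟩
          · rw [h1, hCdef, hV1def]; ring
          · rw [h2, hSdef, hV2def]; ring
      -- the per-point relations
      have E1 : ∀ i : Fin 4, W1 i - t i * W2 i = C + t i * V1 := by
        intro i
        obtain ⟨f1, f2, f3⟩ := e i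
        rw [hCdef]
        linear_combination (-1) * f1 + V1 * f3 - r i * hV1
      have E2 : ∀ i : Fin 4, W2 i + t i * W1 i = S + t i * V2 := by
        intro i
        obtain ⟨f1, f2, f3⟩ := e i
        rw [hSdef]
        linear_combination (-1) * f2 + V2 * f3 - r i * hV2
      have eqA : ∀ i : Fin 4,
          (W1 i * V1 + W2 i * V2) + t i * (W1 i * V2 - W2 i * V1) = t i := by
        intro i
        linear_combination V1 * E1 i + V2 * E2 i + hCV + t i * hVn
      have eqB : ∀ i : Fin 4,
          (W1 i * V2 - W2 i * V1) - t i * (W1 i * V1 + W2 i * V2) = σ := by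
        intro i
        linear_combination V2 * E1 i - V1 * E2 i + hCS
      have hσcases : σ = 1 ∨ σ = -1 := by
        have h := mul_self_eq_one_iff.mp (by linear_combination hσ2 : σ * σ = 1)
        exact h
      rcases hσcases with hσ1 | hσm1
      · -- ruling A: impossible
        exact (rulingA_false V1 V2 (t 0) (t 1) (eqA 0)
          (by rw [← hσ1]; exact eqB 0) (eqA 1) (by rw [← hσ1]; exact eqB 1)).elim
      · -- ruling B
        have eqB' : ∀ i : Fin 4,
            (W1 i * V2 - W2 i * V1) - t i * (W1 i * V1 + W2 i * V2) = -1 := by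
          intro i; rw [← hσm1]; exact eqB i
        have hclass := rulingB_classify V1 V2 t hbd hVn eqA eqB'
        have hCeq : C = -V2 := by
          linear_combination V1 * hCV + V2 * hCS - C * hVn + V2 * hσm1
        have hSeq : S = V1 := by
          linear_combination V2 * hCV - V1 * hCS - S * hVn - V1 * hσm1
        rcases hclass with ⟨h, h2 | h2⟩ | ⟨h, h2 | h2⟩
        · -- (V1,V2) = (0,1): L = Lu (-1) 0
          right; right; left
          rw [hLset, hCeq, hSeq, h, h2]
          show lineThrough (-1, 0, (0:ℝ)) (0, 1, 1) = Lu (-1) 0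
          unfold Lu; norm_num
        · -- (V1,V2) = (0,-1): L = Lu 1 0
          left
          rw [hLset, hCeq, hSeq, h, h2]
          show lineThrough (-(-1), 0, (0:ℝ)) (0, -1, 1) = Lu 1 0
          unfold Lu; norm_num
        · -- (V1,V2) = (1,0): L = Lu 0 1
          right; left
          rw [hLset, hCeq, hSeq, h, h2]
          show lineThrough (-0, 1, (0:ℝ)) (1, 0, 1) = Lu 0 1
          unfold Lu; norm_num
        · -- (V1,V2) = (-1,0): L = Lu 0 (-1)
          right; right; right
          rw [hLset, hCeq, hSeq, h, h2]
          show lineThrough (-0, -1, (0:ℝ)) (-1, 0, 1) = Lu 0 (-1)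
          unfold Lu; norm_num
    · -- backward: the four lines are transversals
      intro L hL
      simp only [mem_insert_iff, mem_singleton_iff] at hL
      have key : ∀ c s : ℝ,
          (∀ i : Fin 4, (Lu c s ∩ segment ℝ (X (W1 i) (W2 i)) (Y (W1 i) (W2 i))).Nonempty) →
          Lu c s ∈ {L : Set (ℝ × ℝ × ℝ) |
            IsLine L ∧ ∀ i, (L ∩ segment ℝ (X (W1 i) (W2 i)) (Y (W1 i) (W2 i))).Nonempty} :=
        fun c s h => ⟨Lu_isLine c s, h⟩
      rcases hL with rfl | rfl | rfl | rfl
      · apply key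
        intro i
        fin_cases i
        · show (Lu 1 0 ∩ segment ℝ (X (q / 2) (q / 2)) (Y (q / 2) (q / 2))).Nonempty
          exact line_meets (t := 1 - q) habs_1mq
            (by linear_combination ((1/2)) * hq) (by linear_combination ((-1/2)) * hq)
        · show (Lu 1 0 ∩ segment ℝ (X (-(q / 2)) (q / 2)) (Y (-(q / 2)) (q / 2))).Nonempty
          exact line_meets (t := -(1 + q)) habs_neg
            (by linear_combination ((1/2)) * hq) (by linear_combination ((1/2)) * hq)
        · show (Lu 1 0 ∩ segment ℝ (X (-(q / 2)) (-(q / 2))) (Y (-(q / 2)) (-(q / 2)))).Nonempty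
          exact line_meets (t := 1 + q) habs_1pq
            (by linear_combination ((1/2)) * hq) (by linear_combination ((-1/2)) * hq)
        · show (Lu 1 0 ∩ segment ℝ (X (q / 2) (-(q / 2))) (Y (q / 2) (-(q / 2)))).Nonempty
          exact line_meets (t := q - 1) habs_qm1
            (by linear_combination ((1/2)) * hq) (by linear_combination ((1/2)) * hq)
      · apply key
        intro i
        fin_cases i
        · show (Lu 0 1 ∩ segment ℝ (X (q / 2) (q / 2)) (Y (q / 2) (q / 2))).Nonempty
          exact line_meets (t := q - 1) habs_qm1
            (by linear_combination ((-1/2)) * hq) (by linear_combination ((1/2)) * hq)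
        · show (Lu 0 1 ∩ segment ℝ (X (-(q / 2)) (q / 2)) (Y (-(q / 2)) (q / 2))).Nonempty
          exact line_meets (t := 1 - q) habs_1mq
            (by linear_combination ((1/2)) * hq) (by linear_combination ((1/2)) * hq)
        · show (Lu 0 1 ∩ segment ℝ (X (-(q / 2)) (-(q / 2))) (Y (-(q / 2)) (-(q / 2)))).Nonempty
          exact line_meets (t := -(1 + q)) habs_neg
            (by linear_combination ((-1/2)) * hq) (by linear_combination ((1/2)) * hq)
        · show (Lu 0 1 ∩ segment ℝ (X (q / 2) (-(q / 2))) (Y (q / 2) (-(q / 2)))).Nonempty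
          exact line_meets (t := 1 + q) habs_1pq
            (by linear_combination ((1/2)) * hq) (by linear_combination ((1/2)) * hq)
      · apply key
        intro i
        fin_cases i
        · show (Lu (-1) 0 ∩ segment ℝ (X (q / 2) (q / 2)) (Y (q / 2) (q / 2))).Nonempty
          exact line_meets (t := 1 + q) habs_1pq
            (by linear_combination ((-1/2)) * hq) (by linear_combination ((1/2)) * hq)
        · show (Lu (-1) 0 ∩ segment ℝ (X (-(q / 2)) (q / 2)) (Y (-(q / 2)) (q / 2))).Nonempty
          exact line_meets (t := q - 1) habs_qm1
            (by linear_combination ((-1/2)) * hq) (by linear_combination ((-1/2)) * hq)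
        · show (Lu (-1) 0 ∩ segment ℝ (X (-(q / 2)) (-(q / 2))) (Y (-(q / 2)) (-(q / 2)))).Nonempty
          exact line_meets (t := 1 - q) habs_1mq
            (by linear_combination ((-1/2)) * hq) (by linear_combination ((1/2)) * hq)
        · show (Lu (-1) 0 ∩ segment ℝ (X (q / 2) (-(q / 2))) (Y (q / 2) (-(q / 2)))).Nonempty
          exact line_meets (t := -(1 + q)) habs_neg
            (by linear_combination ((-1/2)) * hq) (by linear_combination ((-1/2)) * hq)
      · apply key
        intro i
        fin_cases i
        · show (Lu 0 (-1) ∩ segment ℝ (X (q / 2) (q / 2)) (Y (q / 2) (q / 2))).Nonempty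
          exact line_meets (t := -(1 + q)) habs_neg
            (by linear_combination ((1/2)) * hq) (by linear_combination ((-1/2)) * hq)
        · show (Lu 0 (-1) ∩ segment ℝ (X (-(q / 2)) (q / 2)) (Y (-(q / 2)) (q / 2))).Nonempty
          exact line_meets (t := 1 + q) habs_1pq
            (by linear_combination ((-1/2)) * hq) (by linear_combination ((-1/2)) * hq)
        · show (Lu 0 (-1) ∩ segment ℝ (X (-(q / 2)) (-(q / 2))) (Y (-(q / 2)) (-(q / 2)))).Nonempty
          exact line_meets (t := q - 1) habs_qm1
            (by linear_combination ((1/2)) * hq) (by linear_combination ((-1/2)) * hq)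
        · show (Lu 0 (-1) ∩ segment ℝ (X (q / 2) (-(q / 2))) (Y (q / 2) (-(q / 2)))).Nonempty
          exact line_meets (t := 1 - q) habs_1mq
            (by linear_combination ((-1/2)) * hq) (by linear_combination ((-1/2)) * hq)
  -- finish: finiteness and cardinality
  have hd : ∀ (c s c' s' : ℝ), (c ≠ c' ∨ s ≠ s') → Lu c s ≠ Lu c' s' := by
    intro c s c' s' h he
    obtain ⟨h1, h2⟩ := Lu_inj he
    rcases h with h | h
    exacts [h h1, h h2]
  have d12 : Lu 1 0 ≠ Lu 0 1 := hd _ _ _ _ (Or.inl one_ne_zero)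
  have d13 : Lu 1 0 ≠ Lu (-1) 0 := hd _ _ _ _ (Or.inl (by norm_num))
  have d14 : Lu 1 0 ≠ Lu 0 (-1) := hd _ _ _ _ (Or.inl one_ne_zero)
  have d23 : Lu 0 1 ≠ Lu (-1) 0 := hd _ _ _ _ (Or.inl (by norm_num))
  have d24 : Lu 0 1 ≠ Lu 0 (-1) := hd _ _ _ _ (Or.inr (by norm_num))
  have d34 : Lu (-1) 0 ≠ Lu 0 (-1) := hd _ _ _ _ (Or.inl (by norm_num))
  show ({L : Set (ℝ × ℝ × ℝ) |
      IsLine L ∧ ∀ i, (L ∩ segment ℝ (X (W1 i) (W2 i)) (Y (W1 i) (W2 i))).Nonempty}).Finite ∧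
    ({L : Set (ℝ × ℝ × ℝ) |
      IsLine L ∧ ∀ i, (L ∩ segment ℝ (X (W1 i) (W2 i)) (Y (W1 i) (W2 i))).Nonempty}).ncard = 4
  rw [hset]
  constructor
  · exact (((Set.finite_singleton _).insert _).insert _).insert _
  · rw [Set.ncard_insert_of_notMem (by
        simp only [mem_insert_iff, mem_singleton_iff]
        push_neg
        exact ⟨d12, d13, d14⟩) ((Set.finite_singleton _).insert _ |>.insert _),
      Set.ncard_insert_of_notMem (by
        simp only [mem_insert_iff, mem_singleton_iff]
        push_neg
        exact ⟨d23, d24⟩) ((Set.finite_singleton _).insert _),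
      Set.ncard_pair d34]
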